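/- arXiv:2009.03607 — 4 statements merged into one kernel-verified Lean document; each statement's English description precedes it below -/
import Mathlib

section
/- If G : Δ_n → ℝ is λ-nice with 0 < λ ≤ 1, then G is (n^{1−λ}, λ)-locally Hölder continuous: there exists c ∈ (0,1) such that |G(x) − G(y)| ≤ n^{1−λ}·|x−y|₁^λ whenever x, y ∈ Δ_n and |x−y|₁ ≤ c. -/
open Finset

/-- Key slope estimate: an increment of a nice `g` over a short interval is
bounded above by `(v - u) ^ lam`. -/
lemma nice_upper (g : ℝ → ℝ) (hc : ConvexOn ℝ (Set.Icc (0:ℝ) 1) g) (hg1 : g 1 = 0)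
    (lam ε₀ : ℝ) (hlam0 : 0 < lam) (hlam1 : lam ≤ 1) (hε₀ : 0 < ε₀)
    (hb : ∀ ε : ℝ, 0 < ε → ε < ε₀ → max |g ε| |g (1 - ε)| ≤ ε ^ lam)
    {u v : ℝ} (hu : 0 ≤ u) (hv : v ≤ 1) (huv : u ≤ v) (hd : v - u ≤ min ε₀ 1 / 2) :
    g v - g u ≤ (v - u) ^ lam := by
  rcases eq_or_lt_of_le huv with rfl | hlt
  · simp [Real.zero_rpow hlam0.ne']
  have hdpos : 0 < v - u := by linarith
  have hε₁pos : 0 < min ε₀ 1 / 2 := by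
    have := lt_min hε₀ one_pos
    positivity
  set ε := min (1 - u) (min ε₀ 1 / 2) with hε_def
  have hεpos : 0 < ε := lt_min (by linarith) hε₁pos
  have hεε₀ : ε < ε₀ := lt_of_le_of_lt (min_le_right _ _)
    (by rcases le_total ε₀ 1 with h | h <;> simp [min_eq_left, min_eq_right, h] <;> linarith)
  have hεu : ε ≤ 1 - u := min_le_left _ _
  have humem : u ∈ Set.Icc (0:ℝ) 1 := ⟨hu, by linarith⟩
  have hvmem : v ∈ Set.Icc (0:ℝ) 1 := ⟨by linarith, hv⟩
  have h1mem : (1:ℝ) ∈ Set.Icc (0:ℝ) 1 := ⟨zero_le_one, le_refl _⟩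
  have hwmem : (1 - ε) ∈ Set.Icc (0:ℝ) 1 := ⟨by linarith [hεu], by linarith⟩
  -- Step 1 : slope(u,v) ≤ slope(u,1)
  have h1 : (g v - g u) / (v - u) ≤ (g 1 - g u) / (1 - u) := by
    rcases eq_or_lt_of_le hv with rfl | hv1
    · exact le_refl _
    · exact hc.secant_mono humem hvmem h1mem (ne_of_gt hlt) (by linarith : (1:ℝ) ≠ u) hv
  -- Step 2 : slope(u,1) ≤ slope(1-ε,1)
  have h2 : (g 1 - g u) / (1 - u) ≤ (g 1 - g (1 - ε)) / (1 - (1 - ε)) := by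
    have e1 : (g 1 - g u) / (1 - u) = (g u - g 1) / (u - 1) := by
      rw [← neg_div_neg_eq]; ring_nf
    have e2 : (g 1 - g (1 - ε)) / (1 - (1 - ε)) = (g (1 - ε) - g 1) / ((1 - ε) - 1) := by
      rw [← neg_div_neg_eq]; ring_nf
    rw [e1, e2]
    rcases eq_or_lt_of_le hεu with heq | hlt'
    · have : u = 1 - ε := by linarith
      rw [this]
    · exact hc.secant_mono h1mem humem hwmem (by linarith : u ≠ 1)
        (by linarith : 1 - ε ≠ 1) (by linarith)
  -- Step 3 : slope(1-ε,1) ≤ ε ^ (lam - 1)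
  have h3 : (g 1 - g (1 - ε)) / (1 - (1 - ε)) ≤ ε ^ (lam - 1) := by
    have hbε := hb ε hεpos hεε₀
    have hneg : -g (1 - ε) ≤ ε ^ lam :=
      le_trans (neg_le_abs _) (le_trans (le_max_right _ _) hbε)
    have hε' : (1 : ℝ) - (1 - ε) = ε := by ring
    rw [hε', hg1, Real.rpow_sub hεpos, Real.rpow_one]
    have : (0 : ℝ) - g (1 - ε) = -g (1 - ε) := by ring
    rw [this]
    exact div_le_div_of_nonneg_right hneg hεpos.le
  -- Combine
  have hslope : (g v - g u) / (v - u) ≤ ε ^ (lam - 1) := le_trans h1 (le_trans h2 h3)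
  have hbound : g v - g u ≤ (v - u) * ε ^ (lam - 1) := by
    rw [div_le_iff₀ hdpos] at hslope
    linarith [hslope]
  have hdε : v - u ≤ ε := le_min (by linarith) hd
  have hmono : ε ^ (lam - 1) ≤ (v - u) ^ (lam - 1) :=
    Real.rpow_le_rpow_of_nonpos hdpos hdε (by linarith)
  have heq : (v - u) ^ lam = (v - u) * (v - u) ^ (lam - 1) := by
    rw [show lam = 1 + (lam - 1) by ring, Real.rpow_add hdpos, Real.rpow_one]
    ring_nf
  calc g v - g u ≤ (v - u) * ε ^ (lam - 1) := hbound
    _ ≤ (v - u) * (v - u) ^ (lam - 1) := by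
        exact mul_le_mul_of_nonneg_left hmono hdpos.le
    _ = (v - u) ^ lam := heq.symm

/-- Two-sided estimate. -/
lemma nice_abs (g : ℝ → ℝ) (hc : ConvexOn ℝ (Set.Icc (0:ℝ) 1) g) (hg0 : g 0 = 0) (hg1 : g 1 = 0)
    (lam ε₀ : ℝ) (hlam0 : 0 < lam) (hlam1 : lam ≤ 1) (hε₀ : 0 < ε₀)
    (hb : ∀ ε : ℝ, 0 < ε → ε < ε₀ → max |g ε| |g (1 - ε)| ≤ ε ^ lam)
    {u v : ℝ} (hu : 0 ≤ u) (hv : v ≤ 1) (huv : u ≤ v) (hd : v - u ≤ min ε₀ 1 / 2) :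
    |g v - g u| ≤ (v - u) ^ lam := by
  -- upper bound from nice_upper; lower bound from nice_upper applied to t ↦ g (1 - t)
  have hup := nice_upper g hc hg1 lam ε₀ hlam0 hlam1 hε₀ hb hu hv huv hd
  set g' : ℝ → ℝ := fun t => g (1 - t) with hg'
  have hc' : ConvexOn ℝ (Set.Icc (0:ℝ) 1) g' := by
    constructor
    · exact convex_Icc 0 1
    · intro x hx y hy a b ha hb' hab
      have hx' : (1 : ℝ) - x ∈ Set.Icc (0:ℝ) 1 := ⟨by linarith [hx.2], by linarith [hx.1]⟩
      have hy' : (1 : ℝ) - y ∈ Set.Icc (0:ℝ) 1 := ⟨by linarith [hy.2], by linarith [hy.1]⟩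
      have key := hc.2 hx' hy' ha hb' hab
      simp only [smul_eq_mul] at key ⊢
      show g (1 - (a * x + b * y)) ≤ a * g (1 - x) + b * g (1 - y)
      rw [show (1:ℝ) - (a * x + b * y) = a * (1 - x) + b * (1 - y) by nlinarith [hab]]
      exact key
  have hb' : ∀ ε : ℝ, 0 < ε → ε < ε₀ → max |g' ε| |g' (1 - ε)| ≤ ε ^ lam := by
    intro ε h1 h2
    have := hb ε h1 h2
    simp only [hg', sub_sub_cancel]
    rw [max_comm]
    exact this
  have hg'1 : g' 1 = 0 := by simp [hg', hg0]
  have hlow := nice_upper g' hc' hg'1 lam ε₀ hlam0 hlam1 hε₀ hb'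
    (u := 1 - v) (v := 1 - u) (by linarith) (by linarith) (by linarith)
    (by linarith)
  simp only [hg', sub_sub_cancel] at hlow
  have : (1 : ℝ) - u - (1 - v) = v - u := by ring
  rw [this] at hlow
  rw [abs_le]
  constructor
  · linarith
  · exact hup

/-- A function `G` on the simplex `Δ_n` is `λ`-nice if it is a coordinatewise sum of a
convex `g : [0,1] → ℝ` with `g 0 = g 1 = 0` and `max(|g ε|, |g (1−ε)|) ≤ ε^λ` for all
sufficiently small `ε > 0`. -/
def IsNice (n : ℕ) (lam : ℝ) (G : (Fin n → ℝ) → ℝ) : Prop :=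
  ∃ g : ℝ → ℝ, ConvexOn ℝ (Set.Icc (0:ℝ) 1) g ∧ g 0 = 0 ∧ g 1 = 0 ∧
    (∃ ε₀ > (0:ℝ), ∀ ε : ℝ, 0 < ε → ε < ε₀ →
      max |g ε| |g (1 - ε)| ≤ ε ^ lam) ∧
    ∀ x ∈ stdSimplex ℝ (Fin n), G x = ∑ i, g (x i)

/-- Any `λ`-nice function with `0 < λ ≤ 1` is `(n^{1−λ}, λ)`-locally Hölder continuous
with respect to the ℓ₁ norm. -/
theorem nice_implies_locally_holder (n : ℕ) (lam : ℝ) (hlam0 : 0 < lam) (hlam1 : lam ≤ 1)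
    (G : (Fin n → ℝ) → ℝ) (hG : IsNice n lam G) :
    ∃ c ∈ Set.Ioo (0:ℝ) 1, ∀ x ∈ stdSimplex ℝ (Fin n), ∀ y ∈ stdSimplex ℝ (Fin n),
      (∑ i, |x i - y i|) ≤ c →
      |G x - G y| ≤ (n : ℝ) ^ ((1:ℝ) - lam) * (∑ i, |x i - y i|) ^ lam := by
  obtain ⟨g, hconv, hg0, hg1, ⟨ε₀, hε₀, hb⟩, hrep⟩ := hG
  have hcpos : 0 < min ε₀ 1 / 2 := by
    have := lt_min hε₀ one_pos
    positivity
  refine ⟨min ε₀ 1 / 2, ⟨hcpos, by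
    have : min ε₀ 1 ≤ 1 := min_le_right _ _
    linarith⟩, ?_⟩
  intro x hx y hy hsum
  rcases Nat.eq_zero_or_pos n with rfl | hn
  · exact absurd hx.2 (by simp)
  have hnn : (0:ℝ) < (n:ℝ) := by exact_mod_cast hn
  -- coordinates lie in [0,1]
  have hxmem : ∀ i, x i ∈ Set.Icc (0:ℝ) 1 := by
    intro i
    refine ⟨hx.1 i, ?_⟩
    calc x i ≤ ∑ j, x j :=
          Finset.single_le_sum (fun j _ => hx.1 j) (Finset.mem_univ i)
      _ = 1 := hx.2
  have hymem : ∀ i, y i ∈ Set.Icc (0:ℝ) 1 := by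
    intro i
    refine ⟨hy.1 i, ?_⟩
    calc y i ≤ ∑ j, y j :=
          Finset.single_le_sum (fun j _ => hy.1 j) (Finset.mem_univ i)
      _ = 1 := hy.2
  have hdle : ∀ i, |x i - y i| ≤ min ε₀ 1 / 2 := by
    intro i
    calc |x i - y i| ≤ ∑ j, |x j - y j| :=
          Finset.single_le_sum (f := fun j => |x j - y j|) (fun j _ => abs_nonneg _)
            (Finset.mem_univ i)
      _ ≤ min ε₀ 1 / 2 := hsum
  -- per-coordinate Hölder estimate
  have percoord : ∀ i ∈ Finset.univ, |g (x i) - g (y i)| ≤ |x i - y i| ^ lam := by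
    intro i _
    rcases le_total (y i) (x i) with h | h
    · have := nice_abs g hconv hg0 hg1 lam ε₀ hlam0 hlam1 hε₀ hb
        (hymem i).1 (hxmem i).2 h (by have := hdle i; rw [abs_of_nonneg (by linarith)] at this; linarith)
      rwa [abs_of_nonneg (by linarith : (0:ℝ) ≤ x i - y i)]
    · have := nice_abs g hconv hg0 hg1 lam ε₀ hlam0 hlam1 hε₀ hb
        (hxmem i).1 (hymem i).2 h (by have := hdle i; rw [abs_sub_comm, abs_of_nonneg (by linarith)] at this; linarith)
      rw [abs_sub_comm, abs_sub_comm (x i)]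
      rwa [abs_of_nonneg (by linarith : (0:ℝ) ≤ y i - x i)]
  -- power mean inequality
  have hS0 : 0 ≤ ∑ i, |x i - y i| := Finset.sum_nonneg fun i _ => abs_nonneg _
  have hmean : ∑ i, |x i - y i| ^ lam ≤ (n:ℝ) ^ ((1:ℝ) - lam) * (∑ i, |x i - y i|) ^ lam := by
    have hp : (1:ℝ) ≤ 1 / lam := by
      rw [le_div_iff₀ hlam0]; linarith
    have h := Real.arith_mean_le_rpow_mean (Finset.univ) (fun _ : Fin n => ((n:ℝ))⁻¹)
      (fun i => |x i - y i| ^ lam) (fun i _ => by positivity)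
      (by simp [Finset.card_fin]; field_simp) (fun i _ => Real.rpow_nonneg (abs_nonneg _) _) hp
    have hz : ∀ i, (|x i - y i| ^ lam) ^ (1 / lam) = |x i - y i| := by
      intro i
      rw [← Real.rpow_mul (abs_nonneg _), mul_one_div_cancel hlam0.ne', Real.rpow_one]
    rw [one_div_one_div] at h
    simp only [hz] at h
    rw [← Finset.mul_sum, ← Finset.mul_sum] at h
    rw [Real.mul_rpow (by positivity) hS0] at h
    rw [inv_mul_le_iff₀ hnn] at h
    calc ∑ i, |x i - y i| ^ lam
        ≤ (n:ℝ) * (((n:ℝ))⁻¹ ^ lam * (∑ i, |x i - y i|) ^ lam) := h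
      _ = (n:ℝ) ^ ((1:ℝ) - lam) * (∑ i, |x i - y i|) ^ lam := by
          rw [← mul_assoc]
          congr 1
          rw [Real.inv_rpow hnn.le, Real.rpow_sub hnn, Real.rpow_one, div_eq_mul_inv]
  calc |G x - G y| = |∑ i, (g (x i) - g (y i))| := by
        rw [hrep x hx, hrep y hy, ← Finset.sum_sub_distrib]
    _ ≤ ∑ i, |g (x i) - g (y i)| := Finset.abs_sum_le_sum_abs _ _
    _ ≤ ∑ i, |x i - y i| ^ lam := Finset.sum_le_sum percoord
    _ ≤ (n:ℝ) ^ ((1:ℝ) - lam) * (∑ i, |x i - y i|) ^ lam := hmean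
end

section
/- Let g : [0,1] → ℝ be convex with g(0) = g(1) = 0 and suppose max(|g(ε)|, |g(1−ε)|) ≤ ε^λ for all sufficiently small ε > 0, where 0 < λ ≤ 1. Then for all x, y ∈ [0,1] with |x − y| sufficiently small, |g(x) − g(y)| ≤ |x − y|^λ. -/
/-- Slope monotonicity for convex functions: if `a ≤ c`, `b ≤ d`, `a < b`, `c < d`,
then the slope over `[a,b]` is at most the slope over `[c,d]`. -/
lemma slope_mono_aux {s : Set ℝ} {g : ℝ → ℝ} (hconv : ConvexOn ℝ s g)
    {a b c d : ℝ} (ha : a ∈ s) (hb : b ∈ s) (hc : c ∈ s) (hd : d ∈ s)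
    (hab : a < b) (hcd : c < d) (hac : a ≤ c) (hbd : b ≤ d) :
    (g b - g a) / (b - a) ≤ (g d - g c) / (d - c) := by
  have h1 : (g b - g a) / (b - a) ≤ (g d - g a) / (d - a) :=
    hconv.secant_mono ha hb hd (ne_of_gt hab) (ne_of_gt (lt_of_lt_of_le hab hbd)) hbd
  have h2 : (g a - g d) / (a - d) ≤ (g c - g d) / (c - d) :=
    hconv.secant_mono hd ha hc (ne_of_lt (lt_of_lt_of_le hab hbd)) (ne_of_lt hcd) hac
  have e1 : (g a - g d) / (a - d) = (g d - g a) / (d - a) := by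
    rw [← neg_div_neg_eq]; ring_nf
  have e2 : (g c - g d) / (c - d) = (g d - g c) / (d - c) := by
    rw [← neg_div_neg_eq]; ring_nf
  rw [e1, e2] at h2
  linarith

/-- If `g : [0,1] → ℝ` is convex with `g 0 = g 1 = 0` and `max(|g ε|, |g (1−ε)|) ≤ ε^λ`
for all sufficiently small `ε > 0` (where `0 < λ ≤ 1`), then
`|g x − g y| ≤ |x − y|^λ` whenever `x, y ∈ [0,1]` are sufficiently close. -/
theorem nice_one_dim_holder (g : ℝ → ℝ) (lam : ℝ) (hlam0 : 0 < lam) (hlam1 : lam ≤ 1)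
    (hconv : ConvexOn ℝ (Set.Icc (0:ℝ) 1) g) (h0 : g 0 = 0) (h1 : g 1 = 0)
    (htail : ∃ ε₀ > (0:ℝ), ∀ ε : ℝ, 0 < ε → ε < ε₀ → max |g ε| |g (1 - ε)| ≤ ε ^ lam) :
    ∃ δ > (0:ℝ), ∀ x ∈ Set.Icc (0:ℝ) 1, ∀ y ∈ Set.Icc (0:ℝ) 1,
      |x - y| ≤ δ → |g x - g y| ≤ |x - y| ^ lam := by
  obtain ⟨ε₀, hε₀, htail⟩ := htail
  refine ⟨min ε₀ 1 / 2, by positivity, ?_⟩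
  -- main claim for x < y
  have key : ∀ x ∈ Set.Icc (0:ℝ) 1, ∀ y ∈ Set.Icc (0:ℝ) 1, x < y →
      y - x ≤ min ε₀ 1 / 2 → |g x - g y| ≤ (y - x) ^ lam := by
    intro x hx y hy hxy hd
    set h := y - x with hh
    have hhpos : 0 < h := by simp [hh]; linarith
    have hhε : h < ε₀ := lt_of_le_of_lt hd (by
      have := min_le_left ε₀ 1; linarith)
    have hh1 : h < 1 := lt_of_le_of_lt hd (by
      have := min_le_right ε₀ 1; linarith)
    obtain ⟨hx0, hx1⟩ := hx
    obtain ⟨hy0, hy1⟩ := hy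
    have hmem0 : (0:ℝ) ∈ Set.Icc (0:ℝ) 1 := by constructor <;> norm_num
    have hmem1 : (1:ℝ) ∈ Set.Icc (0:ℝ) 1 := by constructor <;> norm_num
    have hmemh : h ∈ Set.Icc (0:ℝ) 1 := ⟨le_of_lt hhpos, le_of_lt hh1⟩
    have hmem1h : 1 - h ∈ Set.Icc (0:ℝ) 1 := ⟨by linarith, by linarith⟩
    have htb := htail h hhpos hhε
    have hgh : |g h| ≤ h ^ lam := le_trans (le_max_left _ _) htb
    have hg1h : |g (1 - h)| ≤ h ^ lam := le_trans (le_max_right _ _) htb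
    -- slope(0,h) ≤ slope(x,y)
    have s1 : (g h - g 0) / (h - 0) ≤ (g y - g x) / (y - x) :=
      slope_mono_aux hconv hmem0 hmemh ⟨hx0, hx1⟩ ⟨hy0, hy1⟩ hhpos hxy hx0 (by linarith)
    -- slope(x,y) ≤ slope(1-h,1)
    have s2 : (g y - g x) / (y - x) ≤ (g 1 - g (1 - h)) / (1 - (1 - h)) :=
      slope_mono_aux hconv ⟨hx0, hx1⟩ ⟨hy0, hy1⟩ hmem1h hmem1 hxy (by linarith)
        (by linarith) hy1
    rw [h0] at s1
    rw [h1] at s2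
    have hyx : y - x = h := rfl
    rw [hyx] at s1 s2
    have e1 : (g h - 0) / (h - 0) = g h / h := by ring_nf
    have e2 : (0 - g (1 - h)) / (1 - (1 - h)) = -g (1 - h) / h := by ring_nf
    rw [e1] at s1
    rw [e2] at s2
    -- so g h ≤ g y - g x ≤ -g(1-h)
    have l1 : g h ≤ g y - g x := by
      have := (div_le_div_iff_of_pos_right hhpos).mp s1
      linarith
    have l2 : g y - g x ≤ -g (1 - h) := by
      have := (div_le_div_iff_of_pos_right hhpos).mp s2
      linarith
    have : |g y - g x| ≤ h ^ lam := by
      rw [abs_le]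
      constructor
      · have : -(h ^ lam) ≤ g h := neg_le_of_abs_le hgh
        linarith
      · have := neg_abs_le (g (1 - h))
        linarith
    rw [abs_sub_comm]
    exact this
  intro x hx y hy hd
  rcases lt_trichotomy x y with hlt | heq | hgt
  · have hyx : |x - y| = y - x := by rw [abs_sub_comm]; exact abs_of_pos (by linarith)
    rw [hyx] at hd ⊢
    exact key x hx y hy hlt hd
  · subst heq
    simp [Real.zero_rpow (ne_of_gt hlam0)]
  · have hyx : |x - y| = x - y := abs_of_pos (by linarith)
    rw [hyx] at hd ⊢
    rw [abs_sub_comm]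
    exact key y hy x hx hgt hd
end

section
/- For any probability distribution w on a d-element set and K ≥ log(2d/ε)·d²/(2ε²), there exists a distribution over K-uniform distributions (vectors in Δ_d with all entries integer multiples of 1/K) whose mean is exactly w and which places probability at least 1 − ε on the ℓ₁-ball of radius ε around w. -/
open Finset


/-- Core decomposition: a vector in `[0,1]^d` with integer coordinate sum `r` is a
convex combination of `{0,1}`-vectors with coordinate sum `r`. -/
lemma frac_decomp (n : ℕ) : ∀ (d r : ℕ) (f : Fin d → ℝ),
    (∀ i, 0 ≤ f i) → (∀ i, f i ≤ 1) → (∑ i, f i = r) →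
    ((univ.filter (fun i => f i ≠ 0 ∧ f i ≠ 1)).card ≤ n) →
    ∃ (N : ℕ) (q : Fin N → ℝ) (x : Fin N → Fin d → ℝ),
      (∀ j, 0 ≤ q j) ∧ (∑ j, q j = 1) ∧
      (∀ j i, x j i = 0 ∨ x j i = 1) ∧
      (∀ j, ∑ i, x j i = r) ∧
      (∀ i, ∑ j, q j * x j i = f i) := by
  induction n with
  | zero =>
    intro d r f h0 h1 hsum hcard
    refine ⟨1, fun _ => 1, fun _ => f, fun _ => zero_le_one, by simp, ?_, by simp [hsum],
      by simp⟩
    intro j i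
    by_contra hc
    push_neg at hc
    have : i ∈ univ.filter (fun i => f i ≠ 0 ∧ f i ≠ 1) := by simp [hc.1, hc.2]
    have := Finset.card_pos.mpr ⟨i, this⟩
    omega
  | succ n ih =>
    intro d r f h0 h1 hsum hcard
    by_cases hall : ∀ i, f i = 0 ∨ f i = 1
    · exact ⟨1, fun _ => 1, fun _ => f, fun _ => zero_le_one, by simp,
        fun _ => hall, by simp [hsum], by simp⟩
    push_neg at hall
    obtain ⟨i₀, hi₀0, hi₀1⟩ := hall
    -- there must be a second fractional coordinate
    have hj : ∃ j₀, j₀ ≠ i₀ ∧ f j₀ ≠ 0 ∧ f j₀ ≠ 1 := by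
      by_contra hc
      push_neg at hc
      have hrest : ∀ i ∈ univ.erase i₀, f i = 0 ∨ f i = 1 := by
        intro i hi
        rcases eq_or_ne i i₀ with h | h
        · simp [h] at hi
        · by_contra hcc
          push_neg at hcc
          exact hcc.2 (hc i h hcc.1)
      have hsplit : ∑ i ∈ univ.erase i₀, f i =
          (((univ.erase i₀).filter (fun i => f i = 1)).card : ℝ) := by
        rw [← Finset.sum_filter_add_sum_filter_not (univ.erase i₀) (fun i => f i = 1)]
        have h2 : ∑ i ∈ (univ.erase i₀).filter (fun i => ¬ f i = 1), f i = 0 := by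
          apply Finset.sum_eq_zero
          intro i hi
          simp only [Finset.mem_filter] at hi
          rcases hrest i hi.1 with h | h
          · exact h
          · exact absurd h hi.2
        have h1 : ∑ i ∈ (univ.erase i₀).filter (fun i => f i = 1), f i =
            (((univ.erase i₀).filter (fun i => f i = 1)).card : ℝ) := by
          rw [Finset.sum_congr rfl (fun i hi => (Finset.mem_filter.mp hi).2)]
          simp
        rw [h1, h2, add_zero]
      have htot : ∑ i ∈ univ.erase i₀, f i + f i₀ = (r : ℝ) := by
        rw [Finset.sum_erase_add univ f (Finset.mem_univ i₀)]; exact hsum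
      set c := ((univ.erase i₀).filter (fun i => f i = 1)).card with hc'
      have hfi : f i₀ = ((r : ℤ) - (c : ℤ) : ℤ) := by
        push_cast
        rw [hsplit] at htot
        linarith
      have h0' : (0:ℤ) ≤ (r : ℤ) - (c : ℤ) := by
        have := h0 i₀; rw [hfi] at this; exact_mod_cast this
      have h1' : ((r : ℤ) - (c : ℤ)) ≤ 1 := by
        have := h1 i₀; rw [hfi] at this; exact_mod_cast this
      interval_cases h : ((r : ℤ) - (c : ℤ))
      · exact hi₀0 (by simpa using hfi)
      · exact hi₀1 (by simpa using hfi)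
    obtain ⟨j₀, hne, hj₀0, hj₀1⟩ := hj
    set a := f i₀ with ha
    set b := f j₀ with hb
    have ha0 : 0 < a := lt_of_le_of_ne (h0 i₀) (Ne.symm hi₀0)
    have ha1 : a < 1 := lt_of_le_of_ne (h1 i₀) hi₀1
    have hb0 : 0 < b := lt_of_le_of_ne (h0 j₀) (Ne.symm hj₀0)
    have hb1 : b < 1 := lt_of_le_of_ne (h1 j₀) hj₀1
    set tp := min (1 - a) b with htp'
    set tm := min a (1 - b) with htm'
    have htp : 0 < tp := lt_min (by linarith) hb0
    have htm : 0 < tm := lt_min ha0 (by linarith)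
    set f1 := fun i => f i + ((if i = i₀ then tp else 0) + (if i = j₀ then -tp else 0))
      with hf1
    set f2 := fun i => f i + ((if i = i₀ then -tm else 0) + (if i = j₀ then tm else 0))
      with hf2
    have hf1val : ∀ i, i ≠ i₀ → i ≠ j₀ → f1 i = f i := by
      intro i h1 h2; simp [hf1, h1, h2]
    have hf2val : ∀ i, i ≠ i₀ → i ≠ j₀ → f2 i = f i := by
      intro i h1 h2; simp [hf2, h1, h2]
    have hne' : i₀ ≠ j₀ := fun h => hne h.symm
    have hf1i₀ : f1 i₀ = a + tp := by simp [hf1, hne', ha]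
    have hf1j₀ : f1 j₀ = b - tp := by simp [hf1, hne, sub_eq_add_neg, hb]
    have hf2i₀ : f2 i₀ = a - tm := by simp [hf2, hne', sub_eq_add_neg, ha]
    have hf2j₀ : f2 j₀ = b + tm := by simp [hf2, hne, hb]
    -- bounds for f1 and f2
    have hb1' : ∀ i, 0 ≤ f1 i ∧ f1 i ≤ 1 := by
      intro i
      rcases eq_or_ne i i₀ with h | h
      · subst h; rw [hf1i₀]
        constructor
        · have : 0 < tp := htp; linarith
        · have : tp ≤ 1 - a := min_le_left _ _; linarith
      rcases eq_or_ne i j₀ with h2 | h2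
      · subst h2; rw [hf1j₀]
        constructor
        · have : tp ≤ b := min_le_right _ _; linarith
        · linarith [htp, h1 i]
      · rw [hf1val i h h2]; exact ⟨h0 i, h1 i⟩
    have hb2' : ∀ i, 0 ≤ f2 i ∧ f2 i ≤ 1 := by
      intro i
      rcases eq_or_ne i i₀ with h | h
      · subst h; rw [hf2i₀]
        constructor
        · have : tm ≤ a := min_le_left _ _; linarith
        · linarith [htm, h1 i]
      rcases eq_or_ne i j₀ with h2 | h2
      · subst h2; rw [hf2j₀]
        constructor
        · linarith [htm, h0 i]
        · have : tm ≤ 1 - b := min_le_right _ _; linarith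
      · rw [hf2val i h h2]; exact ⟨h0 i, h1 i⟩
    -- sums preserved
    have hsum1 : ∑ i, f1 i = (r : ℝ) := by
      simp only [hf1]
      rw [Finset.sum_add_distrib, Finset.sum_add_distrib, hsum]
      simp [Finset.sum_ite_eq']
    have hsum2 : ∑ i, f2 i = (r : ℝ) := by
      simp only [hf2]
      rw [Finset.sum_add_distrib, Finset.sum_add_distrib, hsum]
      simp [Finset.sum_ite_eq']
    -- fractional count decreases
    have hmem_i₀ : i₀ ∈ univ.filter (fun i => f i ≠ 0 ∧ f i ≠ 1) := by
      simp [← ha, hi₀0, hi₀1]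
    have hmem_j₀ : j₀ ∈ univ.filter (fun i => f i ≠ 0 ∧ f i ≠ 1) := by
      simp [← hb, hj₀0, hj₀1]
    have hcard1 : (univ.filter (fun i => f1 i ≠ 0 ∧ f1 i ≠ 1)).card ≤ n := by
      rcases min_cases (1 - a) b with ⟨hmin, _⟩ | ⟨hmin, _⟩
      · -- tp = 1 - a, so f1 i₀ = 1
        have hsub : univ.filter (fun i => f1 i ≠ 0 ∧ f1 i ≠ 1) ⊆
            (univ.filter (fun i => f i ≠ 0 ∧ f i ≠ 1)).erase i₀ := by
          intro i hi
          simp only [Finset.mem_filter, Finset.mem_univ, true_and] at hi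
          have hii₀ : i ≠ i₀ := by
            intro h; subst h
            exact hi.2 (by rw [hf1i₀, htp', hmin]; ring)
          rcases eq_or_ne i j₀ with h2 | h2
          · subst h2; exact Finset.mem_erase.mpr ⟨hii₀, hmem_j₀⟩
          · refine Finset.mem_erase.mpr ⟨hii₀, ?_⟩
            simp only [Finset.mem_filter, Finset.mem_univ, true_and]
            rwa [hf1val i hii₀ h2] at hi
        calc (univ.filter (fun i => f1 i ≠ 0 ∧ f1 i ≠ 1)).card
            ≤ ((univ.filter (fun i => f i ≠ 0 ∧ f i ≠ 1)).erase i₀).card :=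
              Finset.card_le_card hsub
          _ = (univ.filter (fun i => f i ≠ 0 ∧ f i ≠ 1)).card - 1 :=
              Finset.card_erase_of_mem hmem_i₀
          _ ≤ n := by omega
      · -- tp = b, so f1 j₀ = 0
        have hsub : univ.filter (fun i => f1 i ≠ 0 ∧ f1 i ≠ 1) ⊆
            (univ.filter (fun i => f i ≠ 0 ∧ f i ≠ 1)).erase j₀ := by
          intro i hi
          simp only [Finset.mem_filter, Finset.mem_univ, true_and] at hi
          have hij₀ : i ≠ j₀ := by
            intro h; subst h
            exact hi.1 (by rw [hf1j₀, htp', hmin]; ring)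
          rcases eq_or_ne i i₀ with h2 | h2
          · subst h2; exact Finset.mem_erase.mpr ⟨hne', hmem_i₀⟩
          · refine Finset.mem_erase.mpr ⟨hij₀, ?_⟩
            simp only [Finset.mem_filter, Finset.mem_univ, true_and]
            rwa [hf1val i h2 hij₀] at hi
        calc (univ.filter (fun i => f1 i ≠ 0 ∧ f1 i ≠ 1)).card
            ≤ ((univ.filter (fun i => f i ≠ 0 ∧ f i ≠ 1)).erase j₀).card :=
              Finset.card_le_card hsub
          _ = (univ.filter (fun i => f i ≠ 0 ∧ f i ≠ 1)).card - 1 :=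
              Finset.card_erase_of_mem hmem_j₀
          _ ≤ n := by omega
    have hcard2 : (univ.filter (fun i => f2 i ≠ 0 ∧ f2 i ≠ 1)).card ≤ n := by
      rcases min_cases a (1 - b) with ⟨hmin, _⟩ | ⟨hmin, _⟩
      · -- tm = a, so f2 i₀ = 0
        have hsub : univ.filter (fun i => f2 i ≠ 0 ∧ f2 i ≠ 1) ⊆
            (univ.filter (fun i => f i ≠ 0 ∧ f i ≠ 1)).erase i₀ := by
          intro i hi
          simp only [Finset.mem_filter, Finset.mem_univ, true_and] at hi
          have hii₀ : i ≠ i₀ := by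
            intro h; subst h
            exact hi.1 (by rw [hf2i₀, htm', hmin]; ring)
          rcases eq_or_ne i j₀ with h2 | h2
          · subst h2; exact Finset.mem_erase.mpr ⟨hii₀, hmem_j₀⟩
          · refine Finset.mem_erase.mpr ⟨hii₀, ?_⟩
            simp only [Finset.mem_filter, Finset.mem_univ, true_and]
            rwa [hf2val i hii₀ h2] at hi
        calc (univ.filter (fun i => f2 i ≠ 0 ∧ f2 i ≠ 1)).card
            ≤ ((univ.filter (fun i => f i ≠ 0 ∧ f i ≠ 1)).erase i₀).card :=
              Finset.card_le_card hsub
          _ = (univ.filter (fun i => f i ≠ 0 ∧ f i ≠ 1)).card - 1 :=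
              Finset.card_erase_of_mem hmem_i₀
          _ ≤ n := by omega
      · -- tm = 1 - b, so f2 j₀ = 1
        have hsub : univ.filter (fun i => f2 i ≠ 0 ∧ f2 i ≠ 1) ⊆
            (univ.filter (fun i => f i ≠ 0 ∧ f i ≠ 1)).erase j₀ := by
          intro i hi
          simp only [Finset.mem_filter, Finset.mem_univ, true_and] at hi
          have hij₀ : i ≠ j₀ := by
            intro h; subst h
            exact hi.2 (by rw [hf2j₀, htm', hmin]; ring)
          rcases eq_or_ne i i₀ with h2 | h2
          · subst h2; exact Finset.mem_erase.mpr ⟨hne', hmem_i₀⟩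
          · refine Finset.mem_erase.mpr ⟨hij₀, ?_⟩
            simp only [Finset.mem_filter, Finset.mem_univ, true_and]
            rwa [hf2val i h2 hij₀] at hi
        calc (univ.filter (fun i => f2 i ≠ 0 ∧ f2 i ≠ 1)).card
            ≤ ((univ.filter (fun i => f i ≠ 0 ∧ f i ≠ 1)).erase j₀).card :=
              Finset.card_le_card hsub
          _ = (univ.filter (fun i => f i ≠ 0 ∧ f i ≠ 1)).card - 1 :=
              Finset.card_erase_of_mem hmem_j₀
          _ ≤ n := by omega
    obtain ⟨N1, q1, x1, hq1pos, hq1sum, hx1bin, hx1sum, hx1mean⟩ :=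
      ih d r f1 (fun i => (hb1' i).1) (fun i => (hb1' i).2) hsum1 hcard1
    obtain ⟨N2, q2, x2, hq2pos, hq2sum, hx2bin, hx2sum, hx2mean⟩ :=
      ih d r f2 (fun i => (hb2' i).1) (fun i => (hb2' i).2) hsum2 hcard2
    set l := tm / (tp + tm) with hl
    set mu := tp / (tp + tm) with hmu
    have hlpos : 0 ≤ l := div_nonneg htm.le (by linarith)
    have hmupos : 0 ≤ mu := div_nonneg htp.le (by linarith)
    have hlmu : l + mu = 1 := by
      rw [hl, hmu, ← add_div, add_comm tm tp]
      field_simp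
    have hconv : ∀ i, l * f1 i + mu * f2 i = f i := by
      intro i
      simp only [hf1, hf2]
      rcases eq_or_ne i i₀ with h | h
      · subst h
        simp only [if_pos rfl, if_neg hne', if_true]
        have : tp + tm ≠ 0 := by positivity
        rw [hl, hmu]
        field_simp [hl, hmu]
        ring
      rcases eq_or_ne i j₀ with h2 | h2
      · subst h2
        simp only [if_pos rfl, if_neg hne, if_neg h, if_true]
        have : tp + tm ≠ 0 := by positivity
        rw [hl, hmu]
        field_simp [hl, hmu]
        ring
      · simp only [if_neg h, if_neg h2]
        have : l * f i + mu * f i = (l + mu) * f i := by ring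
        rw [add_zero, add_zero, this, hlmu, one_mul]
    refine ⟨N1 + N2, Fin.append (fun j => l * q1 j) (fun j => mu * q2 j),
      Fin.append x1 x2, ?_, ?_, ?_, ?_, ?_⟩
    · intro j
      cases j using Fin.addCases with
      | left j => simpa using mul_nonneg hlpos (hq1pos j)
      | right j => simpa using mul_nonneg hmupos (hq2pos j)
    · rw [Fin.sum_univ_add]
      simp only [Fin.append_left, Fin.append_right]
      rw [← Finset.mul_sum, ← Finset.mul_sum, hq1sum, hq2sum, mul_one, mul_one, hlmu]
    · intro j i
      cases j using Fin.addCases with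
      | left j => simpa using hx1bin j i
      | right j => simpa using hx2bin j i
    · intro j
      cases j using Fin.addCases with
      | left j => simpa using hx1sum j
      | right j => simpa using hx2sum j
    · intro i
      rw [Fin.sum_univ_add]
      simp only [Fin.append_left, Fin.append_right]
      have e1 : ∑ j, l * q1 j * x1 j i = l * f1 i := by
        rw [← hx1mean i, Finset.mul_sum]; congr 1; ext j; ring
      have e2 : ∑ j, mu * q2 j * x2 j i = mu * f2 i := by
        rw [← hx2mean i, Finset.mul_sum]; congr 1; ext j; ring
      rw [e1, e2, hconv]

/-- For any distribution `w` on a `d`-element set and `K ≥ log(2d/ε)·d²/(2ε²)`, there is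
a finitely supported distribution over `K`-uniform distributions (vectors in the simplex
all of whose entries are integer multiples of `1/K`) with mean exactly `w`, placing
probability at least `1 − ε` on the ℓ₁-ball of radius `ε` around `w`. -/
theorem uniform_grid_decomposition (d K : ℕ) (hd : 0 < d) (hK : 0 < K)
    (w : Fin d → ℝ) (hw : w ∈ stdSimplex ℝ (Fin d))
    (ε : ℝ) (hε : 0 < ε)
    (hKbound : Real.log (2 * d / ε) * d ^ 2 / (2 * ε ^ 2) ≤ K) :
    ∃ (N : ℕ) (q : Fin N → ℝ) (v : Fin N → Fin d → ℝ),
      (∀ j, 0 ≤ q j) ∧ (∑ j, q j = 1) ∧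
      (∀ j, v j ∈ stdSimplex ℝ (Fin d)) ∧
      (∀ j i, ∃ m : ℕ, v j i = (m : ℝ) / K) ∧
      (∀ i, ∑ j, q j * v j i = w i) ∧
      1 - ε ≤ ∑ j ∈ Finset.univ.filter (fun j => ∑ i, |v j i - w i| ≤ ε), q j := by
  obtain ⟨hw0, hwsum⟩ := hw
  have hK0 : (0:ℝ) < K := by exact_mod_cast hK
  set m : Fin d → ℕ := fun i => (⌊(K:ℝ) * w i⌋).toNat with hm
  set f : Fin d → ℝ := fun i => Int.fract ((K:ℝ) * w i) with hf
  have hmf : ∀ i, (m i : ℝ) + f i = K * w i := by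
    intro i
    have h1 : (0:ℝ) ≤ (K:ℝ) * w i := mul_nonneg hK0.le (hw0 i)
    have h2 : (0:ℤ) ≤ ⌊(K:ℝ) * w i⌋ := Int.le_floor.mpr (by exact_mod_cast h1)
    have h3 : ((m i : ℕ) : ℝ) = ((⌊(K:ℝ) * w i⌋ : ℤ) : ℝ) := by
      have := Int.toNat_of_nonneg h2
      exact_mod_cast congrArg (Int.cast : ℤ → ℝ) this
    rw [h3]
    exact Int.floor_add_fract _
  have h0f : ∀ i, 0 ≤ f i := fun i => Int.fract_nonneg _
  have h1f : ∀ i, f i < 1 := fun i => Int.fract_lt_one _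
  -- sum of fractional parts is a natural number r = K - ∑ m i
  set M : ℕ := ∑ i, m i with hM
  have hsumf : ∑ i, f i = (K : ℝ) - (M : ℝ) := by
    have : ∑ i, ((m i : ℝ) + f i) = ∑ i, (K:ℝ) * w i := by
      exact Finset.sum_congr rfl (fun i _ => hmf i)
    rw [Finset.sum_add_distrib] at this
    rw [← Finset.mul_sum, hwsum, mul_one] at this
    have hMc : ∑ i, (m i : ℝ) = (M : ℝ) := by rw [hM]; push_cast; ring
    rw [hMc] at this
    linarith
  have hMK : M ≤ K := by
    have h1 : (0:ℝ) ≤ (K:ℝ) - (M:ℝ) := hsumf ▸ Finset.sum_nonneg (fun i _ => h0f i)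
    have : (M:ℝ) ≤ (K:ℝ) := by linarith
    exact_mod_cast this
  set r : ℕ := K - M with hr
  have hrc : (r : ℝ) = (K : ℝ) - (M : ℝ) := by
    rw [hr]; push_cast [Nat.cast_sub hMK]; ring
  have hsumfr : ∑ i, f i = (r : ℝ) := by rw [hrc]; exact hsumf
  -- r ≤ d - 1
  have hrd : (r : ℝ) ≤ (d : ℝ) - 1 := by
    have hne : (univ : Finset (Fin d)).Nonempty := ⟨⟨0, hd⟩, Finset.mem_univ _⟩
    have hlt : ∑ i, f i < ∑ _i : Fin d, (1:ℝ) :=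
      Finset.sum_lt_sum_of_nonempty hne (fun i _ => h1f i)
    rw [hsumfr] at hlt
    simp only [Finset.sum_const, Finset.card_univ, Fintype.card_fin, nsmul_eq_mul,
      mul_one] at hlt
    have : r < d := by exact_mod_cast hlt
    have : r ≤ d - 1 := by omega
    calc (r:ℝ) ≤ ((d-1 : ℕ) : ℝ) := by exact_mod_cast this
      _ = (d:ℝ) - 1 := by push_cast [Nat.cast_sub hd]; ring
  obtain ⟨N, q, x, hqpos, hqsum, hxbin, hxsum, hxmean⟩ :=
    frac_decomp (univ.filter (fun i => f i ≠ 0 ∧ f i ≠ 1)).card d r f h0f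
      (fun i => (h1f i).le) hsumfr le_rfl
  refine ⟨N, q, fun j i => ((m i : ℝ) + x j i) / K, hqpos, hqsum, ?_, ?_, ?_, ?_⟩
  · -- each v j in the simplex
    intro j
    constructor
    · intro i
      apply div_nonneg _ hK0.le
      rcases hxbin j i with h | h <;> rw [h] <;> positivity
    · rw [← Finset.sum_div, Finset.sum_add_distrib, hxsum j]
      have : ∑ i, (m i : ℝ) = (M : ℝ) := by rw [hM]; push_cast; ring
      rw [this, hrc]
      field_simp
      ring
  · -- multiples of 1/K
    intro j i
    rcases hxbin j i with h | h
    · exact ⟨m i, by show ((m i : ℝ) + x j i) / K = _; rw [h, add_zero]⟩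
    · exact ⟨m i + 1, by show ((m i : ℝ) + x j i) / K = _; rw [h]; push_cast; ring⟩
  · -- exact mean
    intro i
    have : ∑ j, q j * (((m i : ℝ) + x j i) / K)
        = (∑ j, (q j * (m i : ℝ) + q j * x j i)) / K := by
      rw [Finset.sum_div]
      exact Finset.sum_congr rfl (fun j _ => by ring)
    rw [this, Finset.sum_add_distrib, ← Finset.sum_mul, hqsum, one_mul, hxmean i, hmf i]
    field_simp
  · -- probability of the ε-ball
    by_cases hε1 : 1 ≤ ε
    · calc (1:ℝ) - ε ≤ 0 := by linarith
        _ ≤ _ := Finset.sum_nonneg (fun j _ => hqpos j)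
    push_neg at hε1
    -- key analytic bound: 2(d-1) ≤ Kε
    have key : 2 * ((d:ℝ) - 1) ≤ (K:ℝ) * ε := by
      rcases Nat.lt_or_ge d 2 with hd2 | hd2
      · have : d = 1 := by omega
        subst this
        simp only [Nat.cast_one, sub_self, mul_zero]
        positivity
      · have hd2' : (2:ℝ) ≤ (d:ℝ) := by exact_mod_cast hd2
        have hpos : (0:ℝ) < 2 * d / ε := by positivity
        have hexp : Real.exp 1 ≤ 2 * (d:ℝ) / ε := by
          have h1 : Real.exp 1 < 2.7182818286 := Real.exp_one_lt_d9
          have h2 : 2 * (d:ℝ) ≤ 2 * d / ε := by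
            rw [le_div_iff₀ hε]
            nlinarith
          nlinarith
        have hlog1 : 1 ≤ Real.log (2 * d / ε) := (Real.le_log_iff_exp_le hpos).mpr hexp
        have hKge : (d:ℝ)^2 / (2 * ε^2) ≤ (K:ℝ) := by
          refine le_trans ?_ hKbound
          apply div_le_div_of_nonneg_right ?_ (by positivity)
          nlinarith [sq_nonneg (d:ℝ)]
        rw [div_le_iff₀ (by positivity)] at hKge
        have hKnn : (0:ℝ) ≤ (K:ℝ) := hK0.le
        nlinarith [mul_nonneg (mul_nonneg hKnn hε.le) (sub_nonneg.mpr hε1.le),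
          sq_nonneg ((d:ℝ) - 2)]
    -- every v j is within ε in ℓ₁
    have hdist : ∀ j : Fin N, ∑ i, |((m i : ℝ) + x j i) / K - w i| ≤ ε := by
      intro j
      have e : ∀ i, ((m i : ℝ) + x j i) / K - w i = (x j i - f i) / K := by
        intro i
        have hwm : w i = ((m i : ℝ) + f i) / K := by
          rw [hmf i]
          exact (mul_div_cancel_left₀ (w i) hK0.ne').symm
        rw [hwm]
        field_simp
        ring
      calc ∑ i, |((m i : ℝ) + x j i) / K - w i|
          = ∑ i, |x j i - f i| / K := by
            refine Finset.sum_congr rfl (fun i _ => ?_)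
            rw [e i, abs_div, abs_of_pos hK0]
        _ ≤ ∑ i, (x j i + f i) / K := by
            refine Finset.sum_le_sum (fun i _ => ?_)
            gcongr
            have hx0 : 0 ≤ x j i := by
              rcases hxbin j i with h | h <;> rw [h] <;> norm_num
            rw [abs_le]
            constructor <;> nlinarith [h0f i]
        _ = ((r:ℝ) + (r:ℝ)) / K := by
            rw [← Finset.sum_div, Finset.sum_add_distrib, hxsum j, hsumfr]
        _ ≤ ε := by
            rw [div_le_iff₀ hK0]
            calc (r:ℝ) + r ≤ 2*((d:ℝ)-1) := by linarith
              _ ≤ (K:ℝ) * ε := key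
              _ = ε * K := mul_comm _ _
    rw [Finset.filter_true_of_mem (fun j _ => hdist j), hqsum]
    linarith
end

section
/- Let G : Δ(E×B) → ℝ be (α,β)-locally Hölder continuous (with respect to ℓ₁) and bounded in [−L, L], with E, B finite of sizes n_E, n_B. Define u_B(v) = Σ_{b} (Σ_e v_{e,b}) · G({v_{e,b}/Σ_{ẽ} v_{ẽ,b}}_{e}) − G({Σ_b v_{e,b}}_e) for v ∈ Δ(E×B). Then for any ε > 0 sufficiently small and any v, v' ∈ Δ(E×B) with |v − v'|₁ ≤ ε^{1/β}/2, one has |u_B(v) − u_B(v')| ≤ 3·n_B·ε·L + 3·α·ε^{1−β}. -/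
open Finset

variable {E B : Type*} [Fintype E] [Fintype B]

/-- Bob's utility as a function of the posterior `v ∈ Δ(E × B)` jointly over the event
and Bob's signal:
`u_B(v) = ∑_b (∑_e v_{e,b}) · G({v_{e,b}/∑_ẽ v_{ẽ,b}}_e) − G({∑_b v_{e,b}}_e)`.
(When `∑_e v_{e,b} = 0` the corresponding summand is `0 · G(·) = 0`.) -/
noncomputable def bobUtil (G : (E → ℝ) → ℝ) (v : E × B → ℝ) : ℝ :=
  (∑ b, (∑ e, v (e, b)) * G (fun e => v (e, b) / ∑ e', v (e', b))) -
    G (fun e => ∑ b, v (e, b))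

/-- `(α,β)`-local Hölder continuity of `G` on the simplex, in the ℓ₁ norm. -/
def LocallyHolder (G : (E → ℝ) → ℝ) (α β : ℝ) : Prop :=
  ∃ c ∈ Set.Ioo (0:ℝ) 1, ∀ x ∈ stdSimplex ℝ E, ∀ y ∈ stdSimplex ℝ E,
    (∑ e, |x e - y e|) ≤ c → |G x - G y| ≤ α * (∑ e, |x e - y e|) ^ β


set_option maxHeartbeats 1000000 in
private lemma col_bound {E : Type*} [Fintype E]
    (G : (E → ℝ) → ℝ) (α β L c ε : ℝ)
    (hα : 0 < α) (hβ0 : 0 < β) (hβ1 : β ≤ 1) (hc0 : 0 < c) (hc1 : c < 1)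
    (hH : ∀ x ∈ stdSimplex ℝ E, ∀ y ∈ stdSimplex ℝ E,
      (∑ e, |x e - y e|) ≤ c → |G x - G y| ≤ α * (∑ e, |x e - y e|) ^ β)
    (hBound : ∀ x ∈ stdSimplex ℝ E, |G x| ≤ L) (hL : 0 ≤ L)
    (u u' : E → ℝ) (hu : ∀ e, 0 ≤ u e) (hu' : ∀ e, 0 ≤ u' e)
    (hu1 : ∑ e, u e ≤ 1)
    (hε : 0 < ε)
    (hd2 : 2 * (∑ e, |u e - u' e|) ≤ ε ^ ((1:ℝ)/β)) :
    |(∑ e, u e) * G (fun e => u e / ∑ e', u e') -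
      (∑ e, u' e) * G (fun e => u' e / ∑ e', u' e')| ≤
      6 * (∑ e, |u e - u' e|) * L / c + α * ε := by
  set d : ℝ := ∑ e, |u e - u' e| with hd_def
  set w : ℝ := ∑ e, u e with hw_def
  set w' : ℝ := ∑ e, u' e with hw'_def
  have hd0 : 0 ≤ d := Finset.sum_nonneg fun e _ => abs_nonneg _
  have hw0 : 0 ≤ w := Finset.sum_nonneg fun e _ => hu e
  have hw'0 : 0 ≤ w' := Finset.sum_nonneg fun e _ => hu' e
  have hww' : |w - w'| ≤ d := by
    rw [hw_def, hw'_def, ← Finset.sum_sub_distrib]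
    exact Finset.abs_sum_le_sum_abs _ _
  have hterm : ∀ z : E → ℝ, (∀ e, 0 ≤ z e) →
      |(∑ e, z e) * G (fun e => z e / ∑ e', z e')| ≤ (∑ e, z e) * L := by
    intro z hz
    rcases eq_or_lt_of_le (Finset.sum_nonneg fun e _ => hz e : (0:ℝ) ≤ ∑ e, z e) with h0 | h0
    · rw [← h0, zero_mul, abs_zero, zero_mul]
    · have hmem : (fun e => z e / ∑ e', z e') ∈ stdSimplex ℝ E :=
        ⟨fun e => div_nonneg (hz e) h0.le, by rw [← Finset.sum_div, div_self h0.ne']⟩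
      rw [abs_mul, abs_of_pos h0]
      exact mul_le_mul_of_nonneg_left (hBound _ hmem) h0.le
  by_cases hA : 2 * d / c ≤ w ∧ 2 * d / c ≤ w'
  · rcases eq_or_lt_of_le hd0 with hd0' | hd0'
    · -- d = 0, so u = u'
      have heq : ∀ e, u e = u' e := by
        intro e
        have h := (Finset.sum_eq_zero_iff_of_nonneg
          (fun e _ => abs_nonneg (u e - u' e))).mp hd0'.symm e (Finset.mem_univ e)
        have := abs_eq_zero.mp h
        linarith
      have hu_eq : u = u' := funext heq
      have hw_eq : w = w' := by rw [hw_def, hw'_def, hu_eq]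
      rw [hu_eq, hw_eq, sub_self, abs_zero]
      positivity
    · -- d > 0
      have hw_pos : 0 < w := lt_of_lt_of_le (by positivity) hA.1
      have hw'_pos : 0 < w' := lt_of_lt_of_le (by positivity) hA.2
      set x : E → ℝ := fun e => u e / w with hx_def
      set x' : E → ℝ := fun e => u' e / w' with hx'_def
      have hx : x ∈ stdSimplex ℝ E :=
        ⟨fun e => div_nonneg (hu e) hw_pos.le, by rw [hx_def, ← Finset.sum_div, div_self hw_pos.ne']⟩
      have hx' : x' ∈ stdSimplex ℝ E :=
        ⟨fun e => div_nonneg (hu' e) hw'_pos.le, by rw [hx'_def, ← Finset.sum_div, div_self hw'_pos.ne']⟩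
      have hs : (∑ e, |x e - x' e|) ≤ 2 * d / w := by
        have step : ∀ e, |x e - x' e| ≤ |u e - u' e| / w + u' e * |w' - w| / (w * w') := by
          intro e
          have he : x e - x' e = (u e - u' e) / w + u' e * (w' - w) / (w * w') := by
            rw [hx_def, hx'_def]
            field_simp
            ring
          rw [he]
          refine (abs_add_le _ _).trans ?_
          rw [abs_div, abs_div, abs_of_pos hw_pos, abs_of_pos (mul_pos hw_pos hw'_pos),
            abs_mul, abs_of_nonneg (hu' e)]
        calc (∑ e, |x e - x' e|)
            ≤ ∑ e, (|u e - u' e| / w + u' e * |w' - w| / (w * w')) :=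
              Finset.sum_le_sum fun e _ => step e
          _ = d / w + w' * |w' - w| / (w * w') := by
              rw [Finset.sum_add_distrib, ← Finset.sum_div, ← Finset.sum_div, ← Finset.sum_mul]
          _ = d / w + |w' - w| / w := by
              congr 1
              field_simp
          _ ≤ 2 * d / w := by
              rw [← add_div, div_le_div_iff_of_pos_right hw_pos]
              have : |w' - w| ≤ d := (abs_sub_comm w' w) ▸ hww'
              linarith
      have hsc : (∑ e, |x e - x' e|) ≤ c := by
        refine hs.trans ?_
        rw [div_le_iff₀ hw_pos]
        have := (div_le_iff₀ hc0).mp hA.1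
        linarith [mul_comm c w]
      have hG := hH x hx x' hx' hsc
      have hdecomp : w * G x - w' * G x' = (w - w') * G x' + w * (G x - G x') := by ring
      have hs0 : (0:ℝ) ≤ ∑ e, |x e - x' e| := Finset.sum_nonneg fun e _ => abs_nonneg _
      calc |w * G x - w' * G x'|
          ≤ |w - w'| * |G x'| + w * |G x - G x'| := by
            rw [hdecomp]
            refine (abs_add_le _ _).trans ?_
            rw [abs_mul, abs_mul, abs_of_nonneg hw0]
        _ ≤ d * L + w * (α * (∑ e, |x e - x' e|) ^ β) := by
            refine add_le_add (mul_le_mul hww' (hBound x' hx') (abs_nonneg _) hd0) ?_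
            exact mul_le_mul_of_nonneg_left hG hw0
        _ ≤ 6 * d * L / c + α * ε := by
            refine add_le_add ?_ ?_
            · rw [le_div_iff₀ hc0]
              nlinarith [mul_nonneg hd0 hL]
            · have h1 : (∑ e, |x e - x' e|) ^ β ≤ (2 * d / w) ^ β :=
                Real.rpow_le_rpow hs0 hs hβ0.le
              have h2 : w * (α * (∑ e, |x e - x' e|) ^ β) ≤ α * (w * (2 * d / w) ^ β) := by
                have := mul_le_mul_of_nonneg_left h1 hα.le
                nlinarith [Real.rpow_nonneg (by positivity : (0:ℝ) ≤ 2 * d / w) β]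
              refine h2.trans ?_
              have h3 : w * (2 * d / w) ^ β = (2 * d) ^ β * w ^ ((1:ℝ) - β) := by
                rw [Real.div_rpow (by positivity) hw_pos.le, Real.rpow_sub hw_pos,
                  Real.rpow_one]
                field_simp
              have h4 : w ^ ((1:ℝ) - β) ≤ 1 :=
                Real.rpow_le_one hw0 hu1 (by linarith)
              have h5 : (2 * d) ^ β ≤ ε := by
                calc (2 * d) ^ β ≤ (ε ^ ((1:ℝ)/β)) ^ β :=
                      Real.rpow_le_rpow (by positivity) hd2 hβ0.le
                  _ = ε := by
                      rw [← Real.rpow_mul hε.le, one_div_mul_cancel hβ0.ne', Real.rpow_one]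
              have h6 : w * (2 * d / w) ^ β ≤ ε := by
                rw [h3]
                nlinarith [Real.rpow_nonneg (by positivity : (0:ℝ) ≤ 2 * d) β,
                  Real.rpow_nonneg hw0 ((1:ℝ) - β)]
              exact mul_le_mul_of_nonneg_left h6 hα.le
  · -- Case B: some weight is small
    have hB : w < 2 * d / c ∨ w' < 2 * d / c := by
      by_cases h : 2 * d / c ≤ w
      · exact Or.inr (lt_of_not_ge fun h' => hA ⟨h, h'⟩)
      · exact Or.inl (lt_of_not_ge h)
    have hdc : d * c ≤ d := by nlinarith
    have hsum : w + w' ≤ 5 * d / c := by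
      rw [le_div_iff₀ hc0]
      rcases hB with h | h
      · have h1 : w * c < 2 * d := (lt_div_iff₀ hc0).mp h
        have h2 : w' ≤ w + d := by
          have := abs_le.mp hww'
          linarith [this.1]
        have h3 : (w + w') * c ≤ (2 * w + d) * c :=
          mul_le_mul_of_nonneg_right (by linarith) hc0.le
        have h4 : (2 * w + d) * c = 2 * (w * c) + d * c := by ring
        linarith
      · have h1 : w' * c < 2 * d := (lt_div_iff₀ hc0).mp h
        have h2 : w ≤ w' + d := by
          have := abs_le.mp hww'
          linarith [this.2]
        have h3 : (w + w') * c ≤ (2 * w' + d) * c :=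
          mul_le_mul_of_nonneg_right (by linarith) hc0.le
        have h4 : (2 * w' + d) * c = 2 * (w' * c) + d * c := by ring
        linarith
    calc |w * G (fun e => u e / ∑ e', u e') - w' * G (fun e => u' e / ∑ e', u' e')|
        ≤ |w * G (fun e => u e / ∑ e', u e')| + |w' * G (fun e => u' e / ∑ e', u' e')| :=
          abs_sub _ _
      _ ≤ w * L + w' * L := add_le_add (hterm u hu) (hterm u' hu')
      _ = (w + w') * L := by ring
      _ ≤ (5 * d / c) * L := mul_le_mul_of_nonneg_right hsum hL
      _ ≤ 6 * d * L / c + α * ε := by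
          have h1 : (5 * d / c) * L = 5 * d * L / c := by ring
          have h2 : 5 * d * L / c ≤ 6 * d * L / c := by
            rw [div_le_div_iff_of_pos_right hc0]
            nlinarith [mul_nonneg hd0 hL]
          have h3 : 0 ≤ α * ε := by positivity
          linarith

set_option maxHeartbeats 1000000 in
/-- If `G` is `(α,β)`-locally Hölder continuous and bounded in `[−L, L]`, then for all
sufficiently small `ε > 0` and posteriors `v, v'` with `|v − v'|₁ ≤ ε^{1/β}/2`,
`|u_B(v) − u_B(v')| ≤ 3·|B|·ε·L + 3·α·ε^{1−β}`. -/
theorem bobUtil_holder_continuous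
    (G : (E → ℝ) → ℝ) (α β L : ℝ) (hα : 0 < α) (hβ0 : 0 < β) (hβ1 : β ≤ 1)
    (hHolder : LocallyHolder G α β)
    (hBound : ∀ x ∈ stdSimplex ℝ E, |G x| ≤ L) :
    ∃ ε₀ > (0:ℝ), ∀ ε : ℝ, 0 < ε → ε ≤ ε₀ →
      ∀ v ∈ stdSimplex ℝ (E × B), ∀ v' ∈ stdSimplex ℝ (E × B),
        (∑ p, |v p - v' p|) ≤ ε ^ ((1:ℝ)/β) / 2 →
        |bobUtil G v - bobUtil G v'| ≤
          3 * (Fintype.card B : ℝ) * ε * L + 3 * α * ε ^ ((1:ℝ) - β) := by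
  obtain ⟨c, hc, hH⟩ := hHolder
  have hc0 : 0 < c := hc.1
  have hc1 : c < 1 := hc.2
  have hML : (0:ℝ) < 3 * max L 1 := by positivity
  refine ⟨min (min (c ^ β) ((α * c / (3 * max L 1)) ^ ((1:ℝ)/β)))
      ((2 / ((Fintype.card B : ℝ) + 1)) ^ ((1:ℝ)/β)), ?_, ?_⟩
  · have h1 : (0:ℝ) < c ^ β := Real.rpow_pos_of_pos hc0 β
    have h2 : (0:ℝ) < (α * c / (3 * max L 1)) ^ ((1:ℝ)/β) :=
      Real.rpow_pos_of_pos (by positivity) _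
    have h3 : (0:ℝ) < (2 / ((Fintype.card B : ℝ) + 1)) ^ ((1:ℝ)/β) :=
      Real.rpow_pos_of_pos (by positivity) _
    simp only [lt_min_iff]
    exact ⟨⟨h1, h2⟩, h3⟩
  intro ε hε hεle v hv v' hv' hδ
  have h1 : ε ≤ c ^ β := hεle.trans ((min_le_left _ _).trans (min_le_left _ _))
  have h2 : ε ≤ (α * c / (3 * max L 1)) ^ ((1:ℝ)/β) :=
    hεle.trans ((min_le_left _ _).trans (min_le_right _ _))
  have h3 : ε ≤ (2 / ((Fintype.card B : ℝ) + 1)) ^ ((1:ℝ)/β) :=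
    hεle.trans (min_le_right _ _)
  have hε1 : ε ≤ 1 := h1.trans (Real.rpow_le_one hc0.le hc1.le hβ0.le)
  have key : ∀ t : ℝ, 0 < t → ε ≤ t ^ ((1:ℝ)/β) → ε ^ β ≤ t := by
    intro t ht hεt
    have h := Real.rpow_le_rpow hε.le hεt hβ0.le
    rwa [← Real.rpow_mul ht.le, one_div_mul_cancel hβ0.ne', Real.rpow_one] at h
  have hεβ1 : ε ^ β ≤ α * c / (3 * max L 1) := key _ (by positivity) h2
  have hεβ2 : ε ^ β ≤ 2 / ((Fintype.card B : ℝ) + 1) := key _ (by positivity) h3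
  have hεcβ : ε ^ ((1:ℝ)/β) ≤ c := by
    have h := Real.rpow_le_rpow hε.le h1 (by positivity : (0:ℝ) ≤ 1/β)
    rwa [← Real.rpow_mul hc0.le, mul_one_div, div_self hβ0.ne', Real.rpow_one] at h
  have hεpow0 : (0:ℝ) ≤ ε ^ ((1:ℝ)/β) := Real.rpow_nonneg hε.le _
  have hεpow_le : ε ^ ((1:ℝ)/β) ≤ ε := by
    have h := Real.rpow_le_rpow_of_exponent_ge hε hε1 (one_le_one_div hβ0 hβ1)
    rwa [Real.rpow_one] at h
  -- marginals
  have hEmarg : (fun e => ∑ b, v (e, b)) ∈ stdSimplex ℝ E :=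
    ⟨fun e => Finset.sum_nonneg fun b _ => hv.1 (e, b), by
      rw [← Fintype.sum_prod_type]; exact hv.2⟩
  have hEmarg' : (fun e => ∑ b, v' (e, b)) ∈ stdSimplex ℝ E :=
    ⟨fun e => Finset.sum_nonneg fun b _ => hv'.1 (e, b), by
      rw [← Fintype.sum_prod_type]; exact hv'.2⟩
  have hL : 0 ≤ L := (abs_nonneg _).trans (hBound _ hEmarg)
  set d : B → ℝ := fun b => ∑ e, |v (e, b) - v' (e, b)| with hd_def
  have hdsum : ∑ b, d b = ∑ p, |v p - v' p| := by
    rw [hd_def]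
    exact (Fintype.sum_prod_type_right (f := fun p : E × B => |v p - v' p|)).symm
  have hd0 : ∀ b, 0 ≤ d b := fun b => Finset.sum_nonneg fun e _ => abs_nonneg _
  have hdb_le : ∀ b, d b ≤ ∑ p, |v p - v' p| := by
    intro b
    rw [← hdsum]
    exact Finset.single_le_sum (fun b' _ => hd0 b') (Finset.mem_univ b)
  have hcol : ∀ b : B,
      |(∑ e, v (e, b)) * G (fun e => v (e, b) / ∑ e', v (e', b)) -
        (∑ e, v' (e, b)) * G (fun e => v' (e, b) / ∑ e', v' (e', b))| ≤
      6 * d b * L / c + α * ε := by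
    intro b
    refine col_bound G α β L c ε hα hβ0 hβ1 hc0 hc1 hH hBound hL _ _
      (fun e => hv.1 (e, b)) (fun e => hv'.1 (e, b)) ?_ hε ?_
    · calc (∑ e, v (e, b))
          ≤ ∑ b', ∑ e, v (e, b') := Finset.single_le_sum
            (fun b' _ => Finset.sum_nonneg fun e _ => hv.1 (e, b')) (Finset.mem_univ b)
        _ = 1 := by rw [← Fintype.sum_prod_type_right]; exact hv.2
    · have := hdb_le b
      linarith
  have hmarg_dist : (∑ e, |(∑ b, v (e, b)) - (∑ b, v' (e, b))|) ≤ ∑ p, |v p - v' p| := by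
    rw [Fintype.sum_prod_type]
    refine Finset.sum_le_sum fun e _ => ?_
    rw [← Finset.sum_sub_distrib]
    exact Finset.abs_sum_le_sum_abs _ _
  have hδc : (∑ p, |v p - v' p|) ≤ c := hδ.trans (by linarith)
  have hGmarg : |G (fun e => ∑ b, v (e, b)) - G (fun e => ∑ b, v' (e, b))| ≤ α * ε := by
    refine (hH _ hEmarg _ hEmarg' (hmarg_dist.trans hδc)).trans ?_
    have hs0 : (0:ℝ) ≤ ∑ e, |(∑ b, v (e, b)) - (∑ b, v' (e, b))| :=
      Finset.sum_nonneg fun e _ => abs_nonneg _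
    have hsle : (∑ e, |(∑ b, v (e, b)) - (∑ b, v' (e, b))|) ≤ ε ^ ((1:ℝ)/β) :=
      (hmarg_dist.trans hδ).trans (by linarith)
    have hpow : (∑ e, |(∑ b, v (e, b)) - (∑ b, v' (e, b))|) ^ β ≤ ε := by
      calc (∑ e, |(∑ b, v (e, b)) - (∑ b, v' (e, b))|) ^ β
          ≤ (ε ^ ((1:ℝ)/β)) ^ β := Real.rpow_le_rpow hs0 hsle hβ0.le
        _ = ε := by rw [← Real.rpow_mul hε.le, one_div_mul_cancel hβ0.ne', Real.rpow_one]
    exact mul_le_mul_of_nonneg_left hpow hα.le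
  -- assemble
  have hsplit : bobUtil G v - bobUtil G v' =
      (∑ b, ((∑ e, v (e, b)) * G (fun e => v (e, b) / ∑ e', v (e', b)) -
        (∑ e, v' (e, b)) * G (fun e => v' (e, b) / ∑ e', v' (e', b)))) -
      (G (fun e => ∑ b, v (e, b)) - G (fun e => ∑ b, v' (e, b))) := by
    unfold bobUtil
    rw [Finset.sum_sub_distrib]
    ring
  have hstep1 : |bobUtil G v - bobUtil G v'| ≤
      (∑ b, (6 * d b * L / c + α * ε)) + α * ε := by
    rw [hsplit]
    refine (abs_sub _ _).trans (add_le_add ?_ hGmarg)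
    exact (Finset.abs_sum_le_sum_abs _ _).trans (Finset.sum_le_sum fun b _ => hcol b)
  have hsum_eq : (∑ b, (6 * d b * L / c + α * ε)) =
      6 * (∑ b, d b) * L / c + (Fintype.card B : ℝ) * (α * ε) := by
    rw [Finset.sum_add_distrib, Finset.sum_const, Finset.card_univ, nsmul_eq_mul]
    congr 1
    rw [← Finset.sum_div, ← Finset.sum_mul, ← Finset.mul_sum]
  rw [hsum_eq] at hstep1
  -- final arithmetic
  set δ : ℝ := ∑ b, d b with hδ_def
  have hδ0 : 0 ≤ δ := Finset.sum_nonneg fun b _ => hd0 b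
  have hδε : δ ≤ ε / 2 := by
    rw [hdsum]
    linarith
  have he1β0 : (0:ℝ) ≤ ε ^ ((1:ℝ) - β) := Real.rpow_nonneg hε.le _
  have heβ0 : (0:ℝ) ≤ ε ^ β := Real.rpow_nonneg hε.le _
  have hεsplit : ε ^ β * ε ^ ((1:ℝ) - β) = ε := by
    rw [← Real.rpow_add hε]
    norm_num
  have hcard0 : (0:ℝ) ≤ (Fintype.card B : ℝ) := Nat.cast_nonneg _
  have c1 : 6 * δ * L / c ≤ α * ε ^ ((1:ℝ) - β) := by
    rw [div_le_iff₀ hc0]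
    have hLmax : L ≤ max L 1 := le_max_left _ _
    have h3L : 3 * L * ε ^ β ≤ α * c := by
      calc 3 * L * ε ^ β ≤ 3 * max L 1 * ε ^ β := by
            apply mul_le_mul_of_nonneg_right _ heβ0
            linarith
        _ ≤ 3 * max L 1 * (α * c / (3 * max L 1)) :=
            mul_le_mul_of_nonneg_left hεβ1 hML.le
        _ = α * c := by field_simp
    have h6 : 6 * δ * L ≤ 3 * ε * L := by nlinarith
    have h7 : 3 * L * ε ^ β * ε ^ ((1:ℝ) - β) ≤ α * c * ε ^ ((1:ℝ) - β) :=
      mul_le_mul_of_nonneg_right h3L he1β0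
    have h8 : 3 * L * ε ^ β * ε ^ ((1:ℝ) - β) = 3 * ε * L := by
      rw [mul_assoc, hεsplit]; ring
    have h9 : α * c * ε ^ ((1:ℝ) - β) = α * ε ^ ((1:ℝ) - β) * c := by ring
    linarith
  have c2 : (Fintype.card B : ℝ) * (α * ε) + α * ε ≤ 2 * α * ε ^ ((1:ℝ) - β) := by
    have hcp : (0:ℝ) < (Fintype.card B : ℝ) + 1 := by positivity
    have h8 : ((Fintype.card B : ℝ) + 1) * ε ^ β ≤ 2 := by
      have := mul_le_mul_of_nonneg_left hεβ2 hcp.le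
      calc ((Fintype.card B : ℝ) + 1) * ε ^ β
          ≤ ((Fintype.card B : ℝ) + 1) * (2 / ((Fintype.card B : ℝ) + 1)) := this
        _ = 2 := by field_simp
    have h9 := mul_le_mul_of_nonneg_right h8 (mul_nonneg hα.le he1β0)
    have h10 : ((Fintype.card B : ℝ) + 1) * ε ^ β * (α * ε ^ ((1:ℝ) - β)) =
        (Fintype.card B : ℝ) * (α * ε) + α * ε := by
      rw [show ((Fintype.card B : ℝ) + 1) * ε ^ β * (α * ε ^ ((1:ℝ) - β)) =
        ((Fintype.card B : ℝ) + 1) * α * (ε ^ β * ε ^ ((1:ℝ) - β)) by ring, hεsplit]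
      ring
    rw [h10] at h9
    linarith
  have hfinal : 0 ≤ 3 * (Fintype.card B : ℝ) * ε * L := mul_nonneg (by positivity) hL
  linarith
end
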